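/- For each s > 1, the sequence a_{n,s} = (ns)^{-n+(-1)^n} is absolutely summable, and for any nontrivial finite linear combination x_n = Σ_{j=1}^k α_j a_{n,s_j} with distinct s_j > 1 and not all α_j zero, one has liminf_{n→∞} |x_{n+1}/x_n| = 0 and limsup_{n→∞} |x_{n+1}/x_n| = ∞. -/

import Mathlib

open Filter Topology

/-- The sequence `a n s = (n s)^{-n + (-1)^n}`. -/
noncomputable def seqA (n : ℕ) (s : ℝ) : ℝ :=
  ((n : ℝ) * s) ^ (-(n : ℤ) + (-1 : ℤ) ^ n)

lemma neg_one_zpow_cases (n : ℕ) : ((-1:ℤ))^n = 1 ∨ ((-1:ℤ))^n = -1 := neg_one_pow_eq_or ℤ n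

lemma aux_zpow_le_zpow_left (a b : ℝ) (m : ℤ) (hm : 0 ≤ m) (h0 : 0 ≤ a) (h : a ≤ b) :
    a ^ m ≤ b ^ m := by
  lift m to ℕ using hm
  rw [zpow_natCast, zpow_natCast]
  exact pow_le_pow_left₀ h0 h _

lemma aux_pow_le_three (n : ℕ) (hn : 1 ≤ n) : ((1:ℝ)/3) ≤ ((n:ℝ)/(n+1))^n := by
  have hn0 : (0:ℝ) < n := by exact_mod_cast hn
  have hy : ((n:ℝ)/(n+1)) = (((n:ℝ)+1)/n)⁻¹ := by rw [inv_div]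
  have h1 : (((n:ℝ)+1)/n) ^ n ≤ 3 := by
    have h2 : ((n:ℝ)+1)/n = 1/n + 1 := by field_simp; ring
    have h3 : (1/(n:ℝ) + 1) ≤ Real.exp (1/n) := Real.add_one_le_exp _
    calc (((n:ℝ)+1)/n) ^ n ≤ Real.exp (1/n) ^ n := by
          rw [h2]; exact pow_le_pow_left₀ (by positivity) h3 n
      _ = Real.exp (n * (1/n)) := (Real.exp_nat_mul _ n).symm
      _ = Real.exp 1 := by rw [mul_one_div, div_self hn0.ne']
      _ ≤ 3 := by have := Real.exp_one_lt_d9; linarith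
  rw [hy, inv_pow, one_div]
  exact inv_anti₀ (by positivity) h1

lemma aux_zpow_tendsto (r : ℝ) (hr : 1 < r) :
    Tendsto (fun n : ℕ => r ^ (-(n:ℤ) + (-1)^n)) atTop (𝓝 0) := by
  have hr0 : (0:ℝ) < r := lt_trans one_pos hr
  have hb : ∀ n : ℕ, r ^ (-(n:ℤ) + (-1)^n) ≤ r * (r⁻¹) ^ n := by
    intro n
    have he : (-(n:ℤ) + (-1)^n) ≤ 1 - n := by
      rcases neg_one_zpow_cases n with h | h <;> omega
    calc r ^ (-(n:ℤ) + (-1)^n) ≤ r ^ ((1:ℤ) - n) := zpow_le_zpow_right₀ hr.le he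
      _ = r * (r⁻¹) ^ n := by
          rw [sub_eq_add_neg, zpow_add₀ hr0.ne', zpow_one, zpow_neg, zpow_natCast, inv_pow]
  have hge : ∀ n : ℕ, 0 ≤ r ^ (-(n:ℤ) + (-1)^n) := fun n => (zpow_pos hr0 _).le
  have hgeo : Tendsto (fun n : ℕ => r * (r⁻¹) ^ n) atTop (𝓝 0) := by
    have := tendsto_pow_atTop_nhds_zero_of_lt_one (by positivity : (0:ℝ) ≤ r⁻¹)
      (inv_lt_one_of_one_lt₀ hr)
    simpa using this.const_mul r
  exact squeeze_zero hge hb hgeo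

lemma aux_summable (s : ℝ) (hs : 1 < s) : Summable (fun n : ℕ => |seqA (n + 1) s|) := by
  have hs0 : (0:ℝ) < s := lt_trans one_pos hs
  refine Summable.of_nonneg_of_le (fun n => abs_nonneg _) ?_
    (summable_geometric_of_lt_one (by positivity) (inv_lt_one_of_one_lt₀ hs))
  intro n
  have hb0 : (0:ℝ) < ((n+1:ℕ):ℝ) * s := by positivity
  have hb1 : (1:ℝ) ≤ ((n+1:ℕ):ℝ) * s := by
    have : (1:ℝ) ≤ ((n+1:ℕ):ℝ) := by exact_mod_cast Nat.one_le_iff_ne_zero.2 (Nat.succ_ne_zero n)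
    nlinarith
  have habs : |seqA (n+1) s| = (((n+1:ℕ):ℝ) * s) ^ (-((n+1:ℕ):ℤ) + (-1:ℤ)^(n+1)) :=
    abs_of_pos (zpow_pos hb0 _)
  rw [seqA] at habs ⊢
  rw [habs]
  have he : (-((n+1:ℕ):ℤ) + (-1:ℤ)^(n+1)) ≤ -(n:ℤ) := by
    rcases neg_one_zpow_cases (n+1) with h | h <;> push_cast <;> omega
  calc (((n+1:ℕ):ℝ) * s) ^ (-((n+1:ℕ):ℤ) + (-1:ℤ)^(n+1))
      ≤ (((n+1:ℕ):ℝ) * s) ^ (-(n:ℤ)) := zpow_le_zpow_right₀ hb1 he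
    _ = ((((n+1:ℕ):ℝ) * s) ^ n)⁻¹ := by rw [zpow_neg, zpow_natCast]
    _ ≤ (s ^ n)⁻¹ := by
        apply inv_anti₀ (by positivity)
        apply pow_le_pow_left₀ hs0.le
        nlinarith [(by exact_mod_cast Nat.one_le_iff_ne_zero.2 (Nat.succ_ne_zero n) :
          (1:ℝ) ≤ ((n+1:ℕ):ℝ))]
    _ = (s⁻¹)^n := by rw [inv_pow]

theorem stmt_11 (s : ℝ) (hs : 1 < s) (k : ℕ) (σ : Fin k → ℝ)
    (hσ : ∀ j, 1 < σ j) (hσinj : Function.Injective σ)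
    (α : Fin k → ℝ) (hα : α ≠ 0)
    (x : ℕ → ℝ) (hx : ∀ n, x n = ∑ j, α j * seqA n (σ j)) :
    Summable (fun n : ℕ => |seqA (n + 1) s|) ∧
      liminf (fun n : ℕ => (↑|x (n + 1) / x n| : EReal)) atTop = 0 ∧
      limsup (fun n : ℕ => (↑|x (n + 1) / x n| : EReal)) atTop = ⊤ := by
  classical
  refine ⟨aux_summable s hs, ?_⟩
  -- setup: the dominant index
  have hαex : ∃ j, α j ≠ 0 := by
    by_contra h; push_neg at h; exact hα (funext h)
  set S : Finset (Fin k) := Finset.univ.filter (fun j => α j ≠ 0) with hS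
  have hSne : S.Nonempty := by
    obtain ⟨j, hj⟩ := hαex
    exact ⟨j, by simp [hS, hj]⟩
  obtain ⟨j0, hj0S, hj0min⟩ := S.exists_min_image σ hSne
  set t := σ j0 with htdef
  have ht : 1 < t := hσ j0
  have ht0 : (0:ℝ) < t := lt_trans one_pos ht
  set c := α j0 with hcdef
  have hc : c ≠ 0 := by
    have := hj0S; rw [hS, Finset.mem_filter] at this; exact this.2
  set g : ℕ → ℝ := fun n => ∑ j, α j * (σ j / t) ^ (-(n:ℤ) + (-1:ℤ)^n) with hg
  have h1 : ∀ n : ℕ, x n = ((n:ℝ)*t) ^ (-(n:ℤ) + (-1:ℤ)^n) * g n := by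
    intro n
    rw [hx, hg, Finset.mul_sum]
    apply Finset.sum_congr rfl
    intro j _
    rw [seqA]
    have hbase : (n:ℝ) * σ j = ((n:ℝ)*t) * (σ j / t) := by field_simp
    rw [hbase, mul_zpow]; ring
  -- limit of g
  have h2 : Tendsto g atTop (𝓝 c) := by
    have hsum : c = ∑ j : Fin k, (if j = j0 then c else 0) := by
      rw [Finset.sum_ite_eq' Finset.univ j0 (fun _ => c)]
      simp
    rw [hsum]
    apply tendsto_finset_sum
    intro j _
    by_cases hjj : j = j0
    · subst hjj
      have hone : σ j / t = 1 := by
        rw [htdef]; exact div_self (lt_trans one_pos (hσ j)).ne'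
      have hconst : ∀ n : ℕ, α j * (σ j / t) ^ (-(n:ℤ) + (-1:ℤ)^n) = c := by
        intro n; rw [hone, one_zpow, mul_one, hcdef]
      have heq : (fun n : ℕ => α j * (σ j / t) ^ (-(n:ℤ) + (-1:ℤ)^n)) = fun _ => c :=
        funext hconst
      rw [heq, if_pos rfl]
      exact tendsto_const_nhds
    · simp only [if_neg hjj]
      by_cases hαj : α j = 0
      · simp only [hαj, zero_mul]; exact tendsto_const_nhds
      · have hjS : j ∈ S := by rw [hS, Finset.mem_filter]; exact ⟨Finset.mem_univ _, hαj⟩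
        have hle : t ≤ σ j := hj0min j hjS
        have hne : t ≠ σ j := fun h => hjj (hσinj h.symm)
        have hlt : t < σ j := lt_of_le_of_ne hle hne
        have hr : 1 < σ j / t := (one_lt_div ht0).2 hlt
        have := (aux_zpow_tendsto _ hr).const_mul (α j)
        simpa using this
  -- eventual bounds on |g|
  have hcpos : (0:ℝ) < |c| := abs_pos.2 hc
  obtain ⟨N, hN⟩ := Metric.tendsto_atTop.1 h2 (|c|/2) (by positivity)
  have hglb : ∀ n, N ≤ n → |c|/2 ≤ |g n| ∧ |g n| ≤ 3/2*|c| := by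
    intro n hn
    have hd := hN n hn
    rw [Real.dist_eq] at hd
    have ha := abs_sub_abs_le_abs_sub (g n) c
    have hb := abs_sub_abs_le_abs_sub c (g n)
    rw [abs_sub_comm c (g n)] at hb
    constructor <;> linarith
  have hgpos : ∀ n, N ≤ n → 0 < |g n| := fun n hn =>
    lt_of_lt_of_le (by positivity) (hglb n hn).1
  have hB_ub : ∀ n, N ≤ n → |g (n+1)| / |g n| ≤ 3 := by
    intro n hn
    rw [div_le_iff₀ (hgpos n hn)]
    have h1' := (hglb (n+1) (le_trans hn (Nat.le_succ n))).2
    have h2' := (hglb n hn).1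
    linarith
  have hB_lb : ∀ n, N ≤ n → (1:ℝ)/3 ≤ |g (n+1)| / |g n| := by
    intro n hn
    rw [le_div_iff₀ (hgpos n hn)]
    have h1' := (hglb (n+1) (le_trans hn (Nat.le_succ n))).1
    have h2' := (hglb n hn).2
    linarith
  -- parity forms
  have keyEven : ∀ n : ℕ, Even n → x n = ((n:ℝ)*t) ^ ((1:ℤ)-n) * g n := by
    intro n hn
    have he : -(n:ℤ) + (-1:ℤ)^n = 1 - n := by rw [hn.neg_one_pow]; ring
    rw [h1 n, he]
  have keyOdd : ∀ n : ℕ, Odd n → x n = ((n:ℝ)*t) ^ (-(n:ℤ)-1) * g n := by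
    intro n hn
    have he : -(n:ℤ) + (-1:ℤ)^n = -(n:ℤ) - 1 := by rw [hn.neg_one_pow]; ring
    rw [h1 n, he]
  -- even-index upper bound on the ratio
  have hEvenBound : ∀ n : ℕ, Even n → N ≤ n → 1 ≤ n →
      |x (n+1) / x n| ≤ ((n:ℝ)+1)⁻¹ * 3 := by
    intro n hev hNn hn1
    have hodd : Odd (n+1) := Even.add_one hev
    have hnR : (1:ℝ) ≤ (n:ℝ) := by exact_mod_cast hn1
    have hb0 : (0:ℝ) < (n:ℝ)*t := by nlinarith
    have hb1 : (0:ℝ) < ((n:ℝ)+1)*t := by nlinarith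
    have hxn : x n = ((n:ℝ)*t) ^ ((1:ℤ)-n) * g n := keyEven n hev
    have hbc : ((n+1:ℕ):ℝ) = (n:ℝ)+1 := by push_cast; ring
    have hec : -((n+1:ℕ):ℤ)-1 = -(n:ℤ)-2 := by push_cast; ring
    have hxn1 : x (n+1) = (((n:ℝ)+1)*t) ^ (-(n:ℤ)-2) * g (n+1) := by
      rw [keyOdd (n+1) hodd, hbc, hec]
    rw [hxn, hxn1, abs_div, abs_mul, abs_mul, abs_of_pos (zpow_pos hb1 _),
      abs_of_pos (zpow_pos hb0 _), ← div_mul_div_comm]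
    have hA : (((n:ℝ)+1)*t) ^ (-(n:ℤ)-2) / (((n:ℝ))*t) ^ ((1:ℤ)-n) ≤ ((n:ℝ)+1)⁻¹ := by
      have h' : ((((n:ℝ))*t) ^ ((1:ℤ)-n))⁻¹ = (((n:ℝ))*t) ^ ((n:ℤ)-1) := by
        rw [← zpow_neg]; congr 1; ring
      rw [div_eq_mul_inv, h']
      calc (((n:ℝ)+1)*t) ^ (-(n:ℤ)-2) * (((n:ℝ))*t) ^ ((n:ℤ)-1)
          ≤ (((n:ℝ)+1)*t) ^ (-(n:ℤ)-2) * (((n:ℝ)+1)*t) ^ ((n:ℤ)-1) := by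
            apply mul_le_mul_of_nonneg_left _ (zpow_pos hb1 _).le
            apply aux_zpow_le_zpow_left _ _ _ (by omega) hb0.le
            nlinarith
        _ = (((n:ℝ)+1)*t) ^ (-3:ℤ) := by rw [← zpow_add₀ hb1.ne']; congr 1; ring
        _ = ((((n:ℝ)+1)*t)^(3:ℕ))⁻¹ := by
            rw [(by norm_num : (-3:ℤ) = -((3:ℕ):ℤ)), zpow_neg, zpow_natCast]
        _ ≤ ((n:ℝ)+1)⁻¹ := by
            apply inv_anti₀ (by positivity)
            have hu : (1:ℝ) ≤ (n:ℝ)+1 := by linarith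
            calc ((n:ℝ)+1) ≤ ((n:ℝ)+1)^(3:ℕ) := le_self_pow₀ hu (by norm_num)
              _ ≤ (((n:ℝ)+1)*t)^(3:ℕ) := by
                  apply pow_le_pow_left₀ (by linarith)
                  nlinarith
    exact mul_le_mul hA (hB_ub n hNn) (by positivity) (by positivity)
  -- odd-index lower bound on the ratio
  have hOddBound : ∀ n : ℕ, Odd n → N ≤ n → 1 ≤ n →
      (n:ℝ)/9 ≤ |x (n+1) / x n| := by
    intro n hodd hNn hn1
    have hev : Even (n+1) := Odd.add_one hodd
    have hnR : (1:ℝ) ≤ (n:ℝ) := by exact_mod_cast hn1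
    have hb0 : (0:ℝ) < (n:ℝ)*t := by nlinarith
    have hb1 : (0:ℝ) < ((n:ℝ)+1)*t := by nlinarith
    have hxn : x n = ((n:ℝ)*t) ^ (-(n:ℤ)-1) * g n := keyOdd n hodd
    have hbc : ((n+1:ℕ):ℝ) = (n:ℝ)+1 := by push_cast; ring
    have hec : (1:ℤ) - ((n+1:ℕ):ℤ) = -(n:ℤ) := by push_cast; ring
    have hxn1 : x (n+1) = (((n:ℝ)+1)*t) ^ (-(n:ℤ)) * g (n+1) := by
      rw [keyEven (n+1) hev, hbc, hec]
    rw [hxn, hxn1, abs_div, abs_mul, abs_mul, abs_of_pos (zpow_pos hb1 _),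
      abs_of_pos (zpow_pos hb0 _), ← div_mul_div_comm]
    have hA : ((n:ℝ)/3) ≤ (((n:ℝ)+1)*t) ^ (-(n:ℤ)) / (((n:ℝ))*t) ^ (-(n:ℤ)-1) := by
      have h' : ((((n:ℝ))*t) ^ (-(n:ℤ)-1))⁻¹ = (((n:ℝ))*t) ^ ((n:ℤ)+1) := by
        rw [← zpow_neg]; congr 1; ring
      conv_rhs => rw [div_eq_mul_inv, h']
      have heq : (((n:ℝ)+1)*t) ^ (-(n:ℤ)) * (((n:ℝ))*t) ^ ((n:ℤ)+1)
          = ((n:ℝ)/((n:ℝ)+1))^n * ((n:ℝ)*t) := by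
        have hq : ((n:ℝ)/((n:ℝ)+1)) = ((n:ℝ)*t)/(((n:ℝ)+1)*t) :=
          (mul_div_mul_right _ _ ht0.ne').symm
        rw [zpow_add₀ hb0.ne', zpow_one, zpow_neg, zpow_natCast, zpow_natCast, hq, div_pow]
        field_simp
      rw [heq]
      have hp := aux_pow_le_three n hn1
      calc (n:ℝ)/3 = (1/3) * ((n:ℝ)*1) := by ring
        _ ≤ ((n:ℝ)/((n:ℝ)+1))^n * ((n:ℝ)*t) := by
            apply mul_le_mul hp ?_ (by positivity) (by positivity)
            nlinarith
    have h9 : (n:ℝ)/9 = ((n:ℝ)/3) * (1/3) := by ring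
    rw [h9]
    exact mul_le_mul hA (hB_lb n hNn) (by norm_num) (by positivity)
  -- subsequences
  have hφ : Tendsto (fun m : ℕ => 2*(m+N)+2) atTop atTop :=
    tendsto_atTop_mono (fun m => by simp only [id_eq]; omega) tendsto_id
  have hψ : Tendsto (fun m : ℕ => 2*(m+N)+1) atTop atTop :=
    tendsto_atTop_mono (fun m => by simp only [id_eq]; omega) tendsto_id
  have hrφ : Tendsto (fun m : ℕ => |x (2*(m+N)+2+1) / x (2*(m+N)+2)|) atTop (𝓝 0) := by
    apply squeeze_zero (fun m => abs_nonneg _)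
      (fun m => hEvenBound (2*(m+N)+2) ⟨m+N+1, by ring⟩ (by omega) (by omega))
    have h1' : Tendsto (fun m : ℕ => (((2*(m+N)+2 : ℕ):ℝ)+1)) atTop atTop := by
      apply tendsto_atTop_mono (fun m => ?_) tendsto_natCast_atTop_atTop
      push_cast
      have : (0:ℝ) ≤ (N:ℝ) := Nat.cast_nonneg N
      linarith
    have := h1'.inv_tendsto_atTop
    simpa using this.mul_const 3
  have hrψ : Tendsto (fun m : ℕ => |x (2*(m+N)+1+1) / x (2*(m+N)+1)|) atTop atTop := by
    apply tendsto_atTop_mono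
      (fun m => hOddBound (2*(m+N)+1) ⟨m+N, by ring⟩ (by omega) (by omega))
    apply Tendsto.atTop_div_const (by norm_num : (0:ℝ) < 9)
    apply tendsto_atTop_mono (fun m => ?_) tendsto_natCast_atTop_atTop
    push_cast
    have : (0:ℝ) ≤ (N:ℝ) := Nat.cast_nonneg N
    linarith
  constructor
  · -- liminf = 0
    apply le_antisymm
    · calc liminf (fun n : ℕ => (↑|x (n + 1) / x n| : EReal)) atTop
          ≤ liminf (fun n : ℕ => (↑|x (n + 1) / x n| : EReal)) (map (fun m : ℕ => 2*(m+N)+2) atTop) :=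
            liminf_le_liminf_of_le hφ
        _ = liminf ((fun n : ℕ => (↑|x (n + 1) / x n| : EReal)) ∘ (fun m : ℕ => 2*(m+N)+2)) atTop :=
            (liminf_comp _ _ _).symm
        _ = (0:EReal) := by
            apply Tendsto.liminf_eq
            have : Tendsto (fun m : ℕ => ((|x (2*(m+N)+2+1) / x (2*(m+N)+2)| : ℝ) : EReal))
                atTop (𝓝 ((0:ℝ):EReal)) := EReal.tendsto_coe.2 hrφ
            exact this
    · exact le_liminf_of_le (by isBoundedDefault)
        (Eventually.of_forall fun n => EReal.coe_nonneg.2 (abs_nonneg _))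
  · -- limsup = ⊤
    refine le_antisymm le_top ?_
    have hrψE : Tendsto (fun m : ℕ => ((|x (2*(m+N)+1+1) / x (2*(m+N)+1)| : ℝ) : EReal))
        atTop (𝓝 (⊤:EReal)) := by
      rw [EReal.tendsto_nhds_top_iff_real]
      intro y
      filter_upwards [hrψ.eventually_gt_atTop y] with m hm
      exact_mod_cast EReal.coe_lt_coe_iff.2 hm
    calc (⊤:EReal)
        = limsup ((fun n : ℕ => (↑|x (n + 1) / x n| : EReal)) ∘ (fun m : ℕ => 2*(m+N)+1)) atTop := by
          refine (Tendsto.limsup_eq ?_).symm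
          exact hrψE
      _ = limsup (fun n : ℕ => (↑|x (n + 1) / x n| : EReal)) (map (fun m : ℕ => 2*(m+N)+1) atTop) :=
          limsup_comp _ _ _
      _ ≤ limsup (fun n : ℕ => (↑|x (n + 1) / x n| : EReal)) atTop :=
          limsup_le_limsup_of_le hψ
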